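/- Given f : V → A independent of J and h : V → A independent of K, with n ∈ K, there exists g : V(n:f) → A independent of K such that V(n:f)(n:g) = V(n:h). -/

import Mathlib

/-- Two valuations agree outside `J`: they take the same values on all coordinates not in `J`. -/
def AgreeOutside {ι A : Type*} (J : Set ι) (a b : ι → A) : Prop :=
  ∀ i, i ∉ J → a i = b i

/-- `𝒰` is a `J`-saturated disjoint cover of `V`. -/
def IsSatDisjCover {ι A : Type*} (J : Set ι) (V : Set (ι → A))
    (𝒰 : Set (Set (ι → A))) : Prop :=
  ⋃₀ 𝒰 = V ∧ 𝒰.Pairwise Disjoint ∧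
    ∀ a ∈ V, ∀ b ∈ V, AgreeOutside J a b → ∀ U ∈ 𝒰, a ∈ U → b ∈ U

/-- `V = V₁ ∪_J V₂`: a `J`-saturated disjoint (binary) cover of `V`. -/
def UnionJ {ι A : Type*} (J : Set ι) (V V₁ V₂ : Set (ι → A)) : Prop :=
  V₁ ∪ V₂ = V ∧ Disjoint V₁ V₂ ∧
    ∀ a ∈ V, ∀ b ∈ V, AgreeOutside J a b →
      ((a ∈ V₁ → b ∈ V₁) ∧ (a ∈ V₂ → b ∈ V₂))

/-- `f : V → A` is independent of `J`. -/
def IndepOf {ι A : Type*} (J : Set ι) (V : Set (ι → A)) (f : (ι → A) → A) : Prop :=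
  ∀ a ∈ V, ∀ b ∈ V, AgreeOutside J a b → f a = f b

/-- `V(n:f) = { ⃗a(n : f ⃗a) : ⃗a ∈ V }`. -/
def teamUpd {ι A : Type*} [DecidableEq ι] (n : ι) (f : (ι → A) → A)
    (V : Set (ι → A)) : Set (ι → A) :=
  (fun a => Function.update a n (f a)) '' V

/-- `V(n:A) = { ⃗a(n : c) : ⃗a ∈ V, c ∈ A }`. -/
def teamExp {ι A : Type*} [DecidableEq ι] (n : ι) (V : Set (ι → A)) : Set (ι → A) :=
  {x | ∃ a ∈ V, ∃ c : A, x = Function.update a n c}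

/-- Interpolation: given `f : V → A` independent of `J` and `h : V → A` independent of `K`,
with `n ∈ K`, there is `g : V(n:f) → A` independent of `K` with `V(n:f)(n:g) = V(n:h)`. -/
theorem exists_interp_indep {ι A : Type*} [DecidableEq ι] (J K : Set ι) (n : ι)
    (hn : n ∈ K) (V : Set (ι → A)) (f h : (ι → A) → A)
    (hf : IndepOf J V f) (hh : IndepOf K V h) :
    ∃ g : (ι → A) → A, IndepOf K (teamUpd n f V) g ∧
      teamUpd n g (teamUpd n f V) = teamUpd n h V := by
  classical
  set g : (ι → A) → A := fun x =>
    if hx : ∃ a, a ∈ V ∧ Function.update a n (f a) = x then h hx.choose else h x with hgdef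
  have gval : ∀ a ∈ V, g (Function.update a n (f a)) = h a := by
    intro a ha
    have hx : ∃ a', a' ∈ V ∧ Function.update a' n (f a') = Function.update a n (f a) :=
      ⟨a, ha, rfl⟩
    have hspec := hx.choose_spec
    have : g (Function.update a n (f a)) = h hx.choose := by
      simp only [hgdef, dif_pos hx]
    rw [this]
    apply hh _ hspec.1 _ ha
    intro i hi
    have hin : i ≠ n := fun hin => hi (hin ▸ hn)
    have := congrFun hspec.2 i
    simpa [Function.update_of_ne hin] using this
  refine ⟨g, ?_, ?_⟩
  · rintro x ⟨a, ha, rfl⟩ y ⟨b, hb, rfl⟩ hxy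
    rw [gval a ha, gval b hb]
    apply hh _ ha _ hb
    intro i hi
    have hin : i ≠ n := fun hin => hi (hin ▸ hn)
    have := hxy i hi
    simpa [Function.update_of_ne hin] using this
  · ext z
    constructor
    · rintro ⟨x, ⟨a, ha, rfl⟩, rfl⟩
      exact ⟨a, ha, by dsimp only; rw [gval a ha, Function.update_idem]⟩
    · rintro ⟨a, ha, rfl⟩
      exact ⟨Function.update a n (f a), ⟨a, ha, rfl⟩,
        by dsimp only; rw [gval a ha, Function.update_idem]⟩
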